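/- The pointwise minimum of two standard interference functions is a standard interference function. -/
import Mathlib


/-- `f` is a standard interference function on `ℝ₊^K`: strictly positive on the
nonnegative orthant, monotone w.r.t. the coordinatewise order, and scalable. -/
def IsStdIF {K : ℕ} (f : (Fin K → ℝ) → ℝ) : Prop :=
  (∀ p : Fin K → ℝ, (∀ i, 0 ≤ p i) → 0 < f p) ∧
  (∀ p q : Fin K → ℝ, (∀ i, 0 ≤ q i) → (∀ i, q i ≤ p i) → f q ≤ f p) ∧
  (∀ p : Fin K → ℝ, (∀ i, 0 ≤ p i) → ∀ α : ℝ, 1 < α → f (α • p) < α * f p)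

theorem stmt4 {K : ℕ} (f g : (Fin K → ℝ) → ℝ)
    (hf : IsStdIF f) (hg : IsStdIF g) :
    IsStdIF (fun p => min (f p) (g p)) := by
  obtain ⟨hf1, hf2, hf3⟩ := hf
  obtain ⟨hg1, hg2, hg3⟩ := hg
  refine ⟨fun p hp => lt_min (hf1 p hp) (hg1 p hp),
    fun p q hq hqp => le_min
      ((min_le_left _ _).trans (hf2 p q hq hqp)) ?_,
    fun p hp α hα => ?_⟩
  · exact (min_le_right _ _).trans (hg2 p q hq hqp)
  · have := hf3 p hp α hα
    have := hg3 p hp α hα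
    have hmul : α * min (f p) (g p) = min (α * f p) (α * g p) := by
      rw [mul_min_of_nonneg _ _ (by linarith : (0:ℝ) ≤ α)]
    simp only
    rw [hmul]
    exact lt_min ((min_le_left _ _).trans_lt ‹f (α • p) < α * f p›)
      ((min_le_right _ _).trans_lt ‹g (α • p) < α * g p›)
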